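/- Let T be (A,(m,n))-isosymmetric and p ≥ m. Then for every i ∈ {0, 1, ..., p−m}, Σ_{k=0}^p (-1)^{p−k} binom(p,k) k^i (T*)^k S_A^n(T) T^k = 0. -/
import Mathlib


open ContinuousLinearMap

noncomputable def SOp {H : Type*} [NormedAddCommGroup H] [InnerProductSpace ℂ H]
    [CompleteSpace H] (A T : H →L[ℂ] H) (n : ℕ) : H →L[ℂ] H :=
  ∑ k ∈ Finset.range (n + 1),
    ((-1 : ℂ) ^ (n - k) * (n.choose k : ℂ)) • (((adjoint T) ^ k) ∘L A ∘L (T ^ (n - k)))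

noncomputable def OmegaS {H : Type*} [NormedAddCommGroup H] [InnerProductSpace ℂ H]
    [CompleteSpace H] (A T : H →L[ℂ] H) (m n : ℕ) : H →L[ℂ] H :=
  ∑ k ∈ Finset.range (m + 1),
    ((-1 : ℂ) ^ (m - k) * (m.choose k : ℂ)) • (((adjoint T) ^ k) ∘L SOp A T n ∘L (T ^ k))

lemma neg_one_pow_sub_eq_add (m k : ℕ) (h : k ≤ m) :
    ((-1:ℂ))^(m-k) = (-1)^(m+k) := by
  have hm : m + k = (m - k) + 2*k := by omega
  rw [hm, pow_add, pow_mul]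
  simp

lemma lemA {M : Type*} [AddCommGroup M] [Module ℂ M] (f : ℕ → M) (m : ℕ)
    (hf : ∀ j, ∑ k ∈ Finset.range (m+1), ((-1:ℂ)^(m+k) * ((m.choose k):ℂ)) • f (j+k) = 0) :
    ∀ p, m ≤ p → ∀ j,
      ∑ k ∈ Finset.range (p+1), ((-1:ℂ)^(p+k) * ((p.choose k):ℂ)) • f (j+k) = 0 := by
  intro p
  induction p with
  | zero =>
    intro hm j
    have : m = 0 := Nat.le_zero.mp hm
    subst this
    exact hf j
  | succ q ih =>
    intro hm j
    rcases Nat.lt_or_ge q m with h1 | h1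
    · have hqm : m = q+1 := by omega
      subst hqm
      exact hf j
    · have A1 := ih h1 j
      have A2 := ih h1 (j+1)
      rw [Finset.sum_range_succ']
      have hterm : ∀ k ∈ Finset.range (q+1),
          ((-1:ℂ)^(q+1+(k+1)) * (((q+1).choose (k+1)):ℂ)) • f (j+(k+1))
          = ((-1:ℂ)^(q+k) * ((q.choose k):ℂ)) • f ((j+1)+k)
            + (-(((-1:ℂ)^(q+(k+1)) * ((q.choose (k+1)):ℂ)) • f (j+(k+1)))) := by
        intro k hk
        have harg : (j+1)+k = j+(k+1) := by omega
        rw [harg, ← neg_smul, ← add_smul]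
        congr 1
        have hs : ((-1:ℂ))^(q+1+(k+1)) = (-1)^(q+k) := by
          have h2 : q+1+(k+1) = (q+k)+2 := by ring
          rw [h2, pow_add]; norm_num
        have hs2 : ((-1:ℂ))^(q+(k+1)) = -((-1:ℂ))^(q+k) := by
          have h2 : q+(k+1) = (q+k)+1 := by ring
          rw [h2, pow_succ]; ring
        rw [hs, hs2, Nat.choose_succ_succ]
        push_cast
        ring
      rw [Finset.sum_congr rfl hterm, Finset.sum_add_distrib, A2]
      have hb : ∑ k ∈ Finset.range (q+1),
            (-(((-1:ℂ)^(q+(k+1)) * ((q.choose (k+1)):ℂ)) • f (j+(k+1))))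
          = -(∑ k ∈ Finset.range (q+1), ((-1:ℂ)^(q+k) * ((q.choose k):ℂ)) • f (j+k))
            + ((-1:ℂ)^(q+0) * ((q.choose 0):ℂ)) • f (j+0) := by
        rw [Finset.sum_neg_distrib]
        have hshift : ∑ k ∈ Finset.range (q+1),
              ((-1:ℂ)^(q+(k+1)) * ((q.choose (k+1)):ℂ)) • f (j+(k+1))
            = ∑ k ∈ Finset.range (q+2), ((-1:ℂ)^(q+k) * ((q.choose k):ℂ)) • f (j+k)
              - ((-1:ℂ)^(q+0) * ((q.choose 0):ℂ)) • f (j+0) := by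
          rw [Finset.sum_range_succ'
            (fun k => ((-1:ℂ)^(q+k) * ((q.choose k):ℂ)) • f (j+k)) (q+1)]
          abel
        rw [hshift, Finset.sum_range_succ]
        simp only [Nat.choose_succ_self, Nat.cast_zero, mul_zero, zero_smul, add_zero]
        abel
      rw [hb, A1]
      have hc0 : ((-1:ℂ))^(q+1+0) * (((q+1).choose 0):ℂ)
          = -(((-1:ℂ))^(q+0) * ((q.choose 0):ℂ)) := by
        simp [pow_succ]
      rw [hc0, neg_smul]
      abel

lemma lemB {M : Type*} [AddCommGroup M] [Module ℂ M] (f : ℕ → M) (m : ℕ)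
    (hf : ∀ j, ∑ k ∈ Finset.range (m+1), ((-1:ℂ)^(m+k) * ((m.choose k):ℂ)) • f (j+k) = 0) :
    ∀ i p, m ≤ p → i + m ≤ p → ∀ j,
      ∑ k ∈ Finset.range (p+1),
        ((-1:ℂ)^(p+k) * ((p.choose k):ℂ) * (k:ℂ)^i) • f (j+k) = 0 := by
  intro i
  induction i using Nat.strong_induction_on with
  | _ i ih =>
    intro p hmp hip j
    match i, ih with
    | 0, ih =>
      simp only [pow_zero, mul_one]
      exact lemA f m hf p hmp j
    | i'+1, ih =>
      obtain ⟨q, rfl⟩ : ∃ q, p = q + 1 := ⟨p - 1, by omega⟩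
      rw [Finset.sum_range_succ']
      have hzero : ((-1:ℂ)^(q+1+0) * (((q+1).choose 0):ℂ) * ((0:ℕ):ℂ)^(i'+1)) • f (j+0)
          = 0 := by simp
      have e1 : ∀ k ∈ Finset.range (q+1),
          ((-1:ℂ)^(q+1+(k+1)) * (((q+1).choose (k+1)):ℂ) * (((k+1:ℕ)):ℂ)^(i'+1)) • f (j+(k+1))
          = ∑ t ∈ Finset.range (i'+1),
              ((((i'.choose t):ℂ) * ((q:ℂ)+1)) * ((-1:ℂ)^(q+k) * ((q.choose k):ℂ) * (k:ℂ)^t))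
                • f ((j+1)+k) := by
        intro k hk
        have harg : j+(k+1) = (j+1)+k := by omega
        rw [harg, ← Finset.sum_smul]
        congr 1
        have hs : ((-1:ℂ))^(q+1+(k+1)) = (-1)^(q+k) := by
          have h2 : q+1+(k+1) = (q+k)+2 := by ring
          rw [h2, pow_add]; norm_num
        have hc : ((q:ℂ)+1) * ((q.choose k):ℂ) = (((q+1).choose (k+1)):ℂ) * ((k:ℂ)+1) := by
          exact_mod_cast congrArg (Nat.cast : ℕ → ℂ) (Nat.add_one_mul_choose_eq q k)
        have hp' : ((k:ℂ)+1)^(i') = ∑ t ∈ Finset.range (i'+1), (k:ℂ)^t * ((i'.choose t):ℂ) := by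
          simpa using add_pow (k:ℂ) 1 i'
        push_cast
        rw [hs]
        have expand : ∑ t ∈ Finset.range (i'+1),
              ((((i'.choose t):ℂ) * ((q:ℂ)+1)) * ((-1:ℂ)^(q+k) * ((q.choose k):ℂ) * (k:ℂ)^t))
            = ((-1:ℂ)^(q+k) * (((q:ℂ)+1) * ((q.choose k):ℂ))) * (((k:ℂ)+1)^i') := by
          rw [hp', Finset.mul_sum]
          exact Finset.sum_congr rfl fun t ht => by ring
        rw [expand, hc]
        ring
      rw [Finset.sum_congr rfl e1, hzero, add_zero, Finset.sum_comm]
      refine Finset.sum_eq_zero fun t ht => ?_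
      have ht' := Finset.mem_range.mp ht
      have inner := ih t (by omega) q (by omega) (by omega) (j+1)
      have hsw : ∀ k ∈ Finset.range (q+1),
          ((((i'.choose t):ℂ) * ((q:ℂ)+1)) * ((-1:ℂ)^(q+k) * ((q.choose k):ℂ) * (k:ℂ)^t))
            • f ((j+1)+k)
          = (((i'.choose t):ℂ) * ((q:ℂ)+1)) •
              (((-1:ℂ)^(q+k) * ((q.choose k):ℂ) * (k:ℂ)^t) • f ((j+1)+k)) :=
        fun k _ => (smul_smul _ _ _).symm
      rw [Finset.sum_congr rfl hsw, ← Finset.smul_sum, inner, smul_zero]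

theorem weighted_difference_vanish {H : Type*} [NormedAddCommGroup H] [InnerProductSpace ℂ H]
    [CompleteSpace H] (A T : H →L[ℂ] H) (hA : A.IsPositive) (m n : ℕ)
    (h : OmegaS A T m n = 0) (p : ℕ) (hp : m ≤ p) :
    ∀ i ≤ p - m,
      ∑ k ∈ Finset.range (p + 1),
        ((-1 : ℂ) ^ (p - k) * (p.choose k : ℂ) * (k : ℂ) ^ i) •
          (((adjoint T) ^ k) ∘L SOp A T n ∘L (T ^ k)) = 0 := by
  intro i hi
  have comp_eq_mul : ∀ (a b : H →L[ℂ] H), a ∘L b = a * b := fun _ _ => rfl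
  have hf : ∀ j, ∑ k ∈ Finset.range (m+1), ((-1:ℂ)^(m+k) * ((m.choose k):ℂ)) •
      (((adjoint T)^(j+k)) ∘L SOp A T n ∘L (T^(j+k))) = 0 := by
    intro j
    have h0 : ∑ k ∈ Finset.range (m+1), ((-1:ℂ)^(m+k) * ((m.choose k):ℂ)) •
        (((adjoint T)^k) ∘L SOp A T n ∘L (T^k)) = 0 := by
      have heq : ∑ k ∈ Finset.range (m+1), ((-1:ℂ)^(m+k) * ((m.choose k):ℂ)) •
          (((adjoint T)^k) ∘L SOp A T n ∘L (T^k)) = OmegaS A T m n := by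
        unfold OmegaS
        refine Finset.sum_congr rfl fun k hk => ?_
        rw [neg_one_pow_sub_eq_add m k (by have := Finset.mem_range.mp hk; omega)]
      rw [heq, h]
    calc ∑ k ∈ Finset.range (m+1), ((-1:ℂ)^(m+k) * ((m.choose k):ℂ)) •
            (((adjoint T)^(j+k)) ∘L SOp A T n ∘L (T^(j+k)))
        = ((adjoint T)^j) * (∑ k ∈ Finset.range (m+1), ((-1:ℂ)^(m+k) * ((m.choose k):ℂ)) •
            (((adjoint T)^k) ∘L SOp A T n ∘L (T^k))) * (T^j) := by
          rw [Finset.mul_sum, Finset.sum_mul]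
          refine Finset.sum_congr rfl fun k _ => ?_
          rw [mul_smul_comm, smul_mul_assoc]
          congr 1
          simp only [comp_eq_mul]
          rw [pow_add (adjoint T) j k,
            show (T:H→L[ℂ]H)^(j+k) = T^k * T^j from by rw [← pow_add, Nat.add_comm j k]]
          simp only [mul_assoc]
      _ = 0 := by rw [h0, mul_zero, zero_mul]
  have key := lemB (fun k => ((adjoint T)^k) ∘L SOp A T n ∘L (T^k)) m hf i p hp (by omega) 0
  simp only [zero_add] at key
  calc ∑ k ∈ Finset.range (p+1), ((-1:ℂ)^(p-k) * ((p.choose k):ℂ) * (k:ℂ)^i) •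
          (((adjoint T)^k) ∘L SOp A T n ∘L (T^k))
      = ∑ k ∈ Finset.range (p+1), ((-1:ℂ)^(p+k) * ((p.choose k):ℂ) * (k:ℂ)^i) •
          (((adjoint T)^k) ∘L SOp A T n ∘L (T^k)) := by
        refine Finset.sum_congr rfl fun k hk => ?_
        rw [neg_one_pow_sub_eq_add p k (by have := Finset.mem_range.mp hk; omega)]
    _ = 0 := key
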